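/- Let R be an integral domain with fraction field K, and let f = f₃Y₁³ + f₂Y₁²Y₂ + f₁Y₁Y₂² + f₀Y₂³ be a nonzero binary cubic form over R. Then the associated cubic ring S_f is an integral domain if and only if f is irreducible as a homogeneous polynomial in K[Y₁, Y₂]. -/

import Mathlib

/-- The multiplication of the cubic ring `S_f` associated to the binary cubic form
`f = f₃Y₁³ + f₂Y₁²Y₂ + f₁Y₁Y₂² + f₀Y₂³`, on coordinates with respect to its basis
`(1, α, β)`: `α·β = −f₀f₃`, `α² = −f₁f₃ + f₂α − f₃β`, `β² = −f₀f₂ + f₀α − f₁β`. -/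
def cubicMul {R : Type*} [CommRing R] (f₀ f₁ f₂ f₃ : R) (x y : Fin 3 → R) : Fin 3 → R :=
  ![x 0 * y 0 - f₁ * f₃ * (x 1 * y 1) - f₀ * f₃ * (x 1 * y 2 + x 2 * y 1)
      - f₀ * f₂ * (x 2 * y 2),
    x 0 * y 1 + x 1 * y 0 + f₂ * (x 1 * y 1) + f₀ * (x 2 * y 2),
    x 0 * y 2 + x 2 * y 0 - f₃ * (x 1 * y 1) - f₁ * (x 2 * y 2)]

namespace CubicAux

open MvPolynomial

/-- A univariate polynomial whose degree equals its trailing degree is a monomial. -/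
lemma poly_eq_C_mul_X_pow {B : Type*} [CommRing B] (p : Polynomial B)
    (h : p.natDegree = p.natTrailingDegree) :
    p = Polynomial.C (p.coeff p.natDegree) * Polynomial.X ^ p.natDegree := by
  ext n
  rw [Polynomial.coeff_C_mul_X_pow]
  rcases lt_trichotomy n p.natDegree with hn | hn | hn
  · rw [if_neg hn.ne, Polynomial.coeff_eq_zero_of_lt_natTrailingDegree (h ▸ hn)]
  · rw [hn, if_pos rfl]
  · rw [if_neg hn.ne', Polynomial.coeff_eq_zero_of_natDegree_lt hn]

variable (K : Type*) [CommRing K]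

/-- The dilation homomorphism `G(Y₁, Y₂) ↦ G(t·Y₁, t·Y₂)`. -/
noncomputable def theta : MvPolynomial (Fin 2) K →+* Polynomial (MvPolynomial (Fin 2) K) :=
  MvPolynomial.eval₂Hom ((Polynomial.C).comp (MvPolynomial.C))
    ![Polynomial.X * Polynomial.C (MvPolynomial.X 0),
      Polynomial.X * Polynomial.C (MvPolynomial.X 1)]

variable {K}

lemma fin2_monomial (u : Fin 2 →₀ ℕ) (a : K) :
    (monomial u a : MvPolynomial (Fin 2) K) = C a * X 0 ^ u 0 * X 1 ^ u 1 := by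
  rw [monomial_eq, Finsupp.prod_fintype _ _ (fun i => pow_zero _), Fin.prod_univ_two, mul_assoc]

lemma theta_monomial (u : Fin 2 →₀ ℕ) (a : K) :
    theta K (monomial u a)
      = Polynomial.X ^ (u 0 + u 1) * Polynomial.C (monomial u a) := by
  rw [fin2_monomial]
  simp only [theta, map_mul, map_pow, eval₂Hom_C, eval₂Hom_X', Matrix.cons_val_zero,
    Matrix.cons_val_one, Matrix.head_cons, RingHom.coe_comp, Function.comp_apply,
    mul_pow, pow_add]
  ring

lemma theta_coeff (G : MvPolynomial (Fin 2) K) (m : Fin 2 →₀ ℕ) (k : ℕ) :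
    coeff m ((theta K G).coeff k) = if m 0 + m 1 = k then coeff m G else 0 := by
  induction G using MvPolynomial.induction_on' with
  | monomial u a =>
    rw [theta_monomial, mul_comm, Polynomial.coeff_C_mul_X_pow]
    by_cases hu : u = m
    · subst hu
      by_cases hk : u 0 + u 1 = k
      · rw [if_pos hk.symm, if_pos hk]
      · rw [if_neg (fun h => hk h.symm), if_neg hk, coeff_zero]
    · have h1 : coeff m (monomial u a) = 0 := by rw [coeff_monomial, if_neg hu]
      split_ifs <;> simp [h1]
  | add p q ihp ihq =>
    simp only [map_add, Polynomial.coeff_add, coeff_add, ihp, ihq]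
    split_ifs <;> simp

lemma theta_eval_one (G : MvPolynomial (Fin 2) K) :
    Polynomial.eval 1 (theta K G) = G := by
  have h : (Polynomial.evalRingHom (1 : MvPolynomial (Fin 2) K)).comp (theta K)
      = RingHom.id _ := by
    apply MvPolynomial.ringHom_ext
    · intro r; simp [theta]
    · intro i; fin_cases i <;> simp [theta]
  exact RingHom.congr_fun h G

lemma theta_const {G : MvPolynomial (Fin 2) K}
    (hG : theta K G = Polynomial.C G) : ∃ k : K, G = C k := by
  have h : (Polynomial.evalRingHom (0 : MvPolynomial (Fin 2) K)).comp (theta K)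
      = (MvPolynomial.C (σ := Fin 2)).comp
          (MvPolynomial.eval₂Hom (RingHom.id K) (fun _ => (0:K))) := by
    apply MvPolynomial.ringHom_ext
    · intro r; simp [theta]
    · intro i; fin_cases i <;> simp [theta]
  have h2 := RingHom.congr_fun h G
  simp only [RingHom.coe_comp, Function.comp_apply, hG, Polynomial.coe_evalRingHom,
    Polynomial.eval_C] at h2
  exact ⟨_, h2⟩

lemma sum_one_classify (m : Fin 2 →₀ ℕ) (h : m 0 + m 1 = 1) :
    m = Finsupp.single 0 1 ∨ m = Finsupp.single 1 1 := by
  rcases (show (m 0 = 1 ∧ m 1 = 0) ∨ (m 0 = 0 ∧ m 1 = 1) by omega) with ⟨h0, h1⟩ | ⟨h0, h1⟩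
  · left
    ext i
    fin_cases i <;> simp [h0, h1, Finsupp.single_apply]
  · right
    ext i
    fin_cases i <;> simp [h0, h1, Finsupp.single_apply]

lemma single_ne_single01 : (Finsupp.single 0 1 : Fin 2 →₀ ℕ) ≠ Finsupp.single 1 1 := by
  intro h
  have := DFunLike.congr_fun h 0
  simp [Finsupp.single_apply] at this

lemma eval_eq_zero_of_theta_linear {G : MvPolynomial (Fin 2) K}
    (hG : theta K G = Polynomial.C G * Polynomial.X) (hG0 : G ≠ 0) :
    ∃ u v : K, ¬(u = 0 ∧ v = 0) ∧ MvPolynomial.eval ![u, v] G = 0 := by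
  have key : ∀ m : Fin 2 →₀ ℕ, m 0 + m 1 ≠ 1 → coeff m G = 0 := by
    intro m hm
    have h := theta_coeff G m (m 0 + m 1)
    rw [if_pos rfl, hG, Polynomial.coeff_C_mul, Polynomial.coeff_X,
      if_neg (fun h => hm h.symm), mul_zero] at h
    exact h.symm
  set a := coeff (Finsupp.single 0 1) G with ha
  set b := coeff (Finsupp.single 1 1) G with hb
  have e0 : (C a * X 0 : MvPolynomial (Fin 2) K) = monomial (Finsupp.single 0 1) a := by
    rw [← C_mul_X_pow_eq_monomial, pow_one]
  have e1 : (C b * X 1 : MvPolynomial (Fin 2) K) = monomial (Finsupp.single 1 1) b := by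
    rw [← C_mul_X_pow_eq_monomial, pow_one]
  have hGform : G = C a * X 0 + C b * X 1 := by
    apply MvPolynomial.ext
    intro m
    rw [coeff_add, e0, e1, coeff_monomial, coeff_monomial]
    by_cases h : m 0 + m 1 = 1
    · rcases sum_one_classify m h with rfl | rfl
      · rw [if_pos rfl, if_neg (fun he => single_ne_single01 he.symm), add_zero]
      · rw [if_pos rfl, if_neg single_ne_single01, zero_add]
    · rw [key m h, if_neg, if_neg, add_zero]
      · intro he
        apply h
        rw [← he]
        simp [Finsupp.single_apply]
      · intro he
        apply h
        rw [← he]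
        simp [Finsupp.single_apply]
  refine ⟨b, -a, ?_, ?_⟩
  · rintro ⟨hb0, ha0⟩
    apply hG0
    rw [hGform, hb0, neg_eq_zero.mp ha0]
    simp
  · rw [hGform]
    simp
    ring

/-- The binary cubic form. -/
noncomputable def bform (e₀ e₁ e₂ e₃ : K) : MvPolynomial (Fin 2) K :=
  C e₃ * X 0 ^ 3 + C e₂ * X 0 ^ 2 * X 1 + C e₁ * X 0 * X 1 ^ 2 + C e₀ * X 1 ^ 3

lemma eval_bform (e₀ e₁ e₂ e₃ u v : K) :
    MvPolynomial.eval ![u, v] (bform e₀ e₁ e₂ e₃)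
      = e₃ * u ^ 3 + e₂ * u ^ 2 * v + e₁ * u * v ^ 2 + e₀ * v ^ 3 := by
  simp [bform]

lemma theta_bform (e₀ e₁ e₂ e₃ : K) :
    theta K (bform e₀ e₁ e₂ e₃)
      = Polynomial.X ^ 3 * Polynomial.C (bform e₀ e₁ e₂ e₃) := by
  simp only [bform, theta, map_add, map_mul, map_pow, eval₂Hom_C, eval₂Hom_X',
    Matrix.cons_val_zero, Matrix.cons_val_one, Matrix.head_cons, RingHom.coe_comp,
    Function.comp_apply, Polynomial.C_add, Polynomial.C_mul, Polynomial.C_pow]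
  ring

lemma bform_ne_zero {e₀ e₁ e₂ e₃ : K} (h3 : e₃ ≠ 0) : bform e₀ e₁ e₂ e₃ ≠ 0 := by
  intro h0
  set ψ := MvPolynomial.eval₂Hom (Polynomial.C : K →+* Polynomial K) ![Polynomial.X, 1]
  have hψ : ψ (bform e₀ e₁ e₂ e₃)
      = Polynomial.C e₃ * Polynomial.X ^ 3 + Polynomial.C e₂ * Polynomial.X ^ 2
        + Polynomial.C e₁ * Polynomial.X + Polynomial.C e₀ := by
    simp only [ψ, bform, map_add, map_mul, map_pow, eval₂Hom_C, eval₂Hom_X',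
      Matrix.cons_val_zero, Matrix.cons_val_one, Matrix.head_cons]
    ring
  rw [h0, map_zero] at hψ
  apply h3
  have := congrArg (fun p => Polynomial.coeff p 3) hψ
  simpa [Polynomial.coeff_X, Polynomial.coeff_one] using this.symm

end CubicAux

namespace CubicAux

open MvPolynomial

variable {K : Type*} [Field K]

lemma not_isUnit_of_eval_zero (p : MvPolynomial (Fin 2) K)
    (hp : MvPolynomial.eval (fun _ => (0:K)) p = 0) : ¬ IsUnit p := by
  intro hu
  have h2 := hu.map (MvPolynomial.eval (fun _ => (0:K)))
  rw [hp] at h2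
  exact not_isUnit_zero h2

lemma irreducible_of_noRoot (e₀ e₁ e₂ e₃ : K)
    (h : ∀ u v : K, e₃ * u ^ 3 + e₂ * u ^ 2 * v + e₁ * u * v ^ 2 + e₀ * v ^ 3 = 0
      → u = 0 ∧ v = 0) :
    Irreducible (bform e₀ e₁ e₂ e₃) := by
  have he₃ : e₃ ≠ 0 := by
    intro h3
    exact one_ne_zero (h 1 0 (by rw [h3]; ring)).1
  have hF0 : bform e₀ e₁ e₂ e₃ ≠ 0 := bform_ne_zero he₃
  constructor
  · intro hu
    exact not_isUnit_of_eval_zero _ (by simp [bform]) hu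
  · intro G H hGH
    by_contra hcon
    push_neg at hcon
    obtain ⟨hGu, hHu⟩ := hcon
    have hG0 : G ≠ 0 := fun h0 => hF0 (by rw [hGH, h0, zero_mul])
    have hH0 : H ≠ 0 := fun h0 => hF0 (by rw [hGH, h0, mul_zero])
    have hθ : theta K G * theta K H = Polynomial.X ^ 3 * Polynomial.C (bform e₀ e₁ e₂ e₃) := by
      rw [← map_mul, ← hGH, theta_bform]
    have hGne : theta K G ≠ 0 := fun h0 => hG0 (by rw [← theta_eval_one G, h0, Polynomial.eval_zero])
    have hHne : theta K H ≠ 0 := fun h0 => hH0 (by rw [← theta_eval_one H, h0, Polynomial.eval_zero])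
    have hCF : (Polynomial.C (bform e₀ e₁ e₂ e₃) : Polynomial (MvPolynomial (Fin 2) K)) ≠ 0 :=
      fun h0 => hF0 (Polynomial.C_eq_zero.mp h0)
    have hX3 : (Polynomial.X ^ 3 : Polynomial (MvPolynomial (Fin 2) K)) ≠ 0 :=
      pow_ne_zero _ Polynomial.X_ne_zero
    have hdeg : (theta K G).natDegree + (theta K H).natDegree = 3 := by
      rw [← Polynomial.natDegree_mul hGne hHne, hθ, Polynomial.natDegree_mul hX3 hCF,
        Polynomial.natDegree_X_pow, Polynomial.natDegree_C, add_zero]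
    have htdeg : (theta K G).natTrailingDegree + (theta K H).natTrailingDegree = 3 := by
      rw [← Polynomial.natTrailingDegree_mul hGne hHne, hθ, mul_comm,
        Polynomial.natTrailingDegree_mul_X_pow hCF, Polynomial.natTrailingDegree_C, zero_add]
    have hle1 := Polynomial.natTrailingDegree_le_natDegree (theta K G)
    have hle2 := Polynomial.natTrailingDegree_le_natDegree (theta K H)
    have hGdt : (theta K G).natDegree = (theta K G).natTrailingDegree := by omega
    have hHdt : (theta K H).natDegree = (theta K H).natTrailingDegree := by omega
    -- monomial forms
    have hcoeffG : ((theta K G).coeff (theta K G).natDegree) = G := by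
      have h2 := congrArg (Polynomial.eval (1 : MvPolynomial (Fin 2) K))
        (poly_eq_C_mul_X_pow (theta K G) hGdt)
      rw [theta_eval_one] at h2
      simpa using h2.symm
    have hcoeffH : ((theta K H).coeff (theta K H).natDegree) = H := by
      have h2 := congrArg (Polynomial.eval (1 : MvPolynomial (Fin 2) K))
        (poly_eq_C_mul_X_pow (theta K H) hHdt)
      rw [theta_eval_one] at h2
      simpa using h2.symm
    have hmonG : theta K G = Polynomial.C G * Polynomial.X ^ (theta K G).natDegree := by
      conv_lhs => rw [poly_eq_C_mul_X_pow (theta K G) hGdt]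
      rw [hcoeffG]
    have hmonH : theta K H = Polynomial.C H * Polynomial.X ^ (theta K H).natDegree := by
      conv_lhs => rw [poly_eq_C_mul_X_pow (theta K H) hHdt]
      rw [hcoeffH]
    -- neither exponent is zero
    have hpos : ∀ G' : MvPolynomial (Fin 2) K, G' ≠ 0 → ¬IsUnit G' →
        theta K G' = Polynomial.C G' * Polynomial.X ^ (theta K G').natDegree →
        1 ≤ (theta K G').natDegree := by
      intro G' hne hunit hmon
      by_contra hlt
      push_neg at hlt
      rw [Nat.lt_one_iff.mp hlt, pow_zero, mul_one] at hmon
      obtain ⟨k, hk⟩ := theta_const hmon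
      rcases eq_or_ne k 0 with rfl | hkne
      · exact hne (by rw [hk, map_zero])
      · exact hunit (hk ▸ (hkne.isUnit.map (MvPolynomial.C : K →+* MvPolynomial (Fin 2) K)))
    have hG1 := hpos G hG0 hGu hmonG
    have hH1 := hpos H hH0 hHu hmonH
    -- a linear factor exists
    have key : ∀ G' H' : MvPolynomial (Fin 2) K, bform e₀ e₁ e₂ e₃ = G' * H' → G' ≠ 0 →
        theta K G' = Polynomial.C G' * Polynomial.X → False := by
      intro G' H' hmul hne hlin
      obtain ⟨u, v, huv, hev⟩ := eval_eq_zero_of_theta_linear hlin hne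
      apply huv
      apply h u v
      rw [← eval_bform e₀ e₁ e₂ e₃ u v, hmul, map_mul, hev, zero_mul]
    rcases (show (theta K G).natDegree = 1 ∨ (theta K H).natDegree = 1 by omega) with h1 | h1
    · exact key G H hGH hG0 (by rw [hmonG, h1, pow_one])
    · exact key H G (hGH.trans (mul_comm G H)) hH0 (by rw [hmonH, h1, pow_one])

lemma noRoot_of_irreducible (e₀ e₁ e₂ e₃ : K) (hirr : Irreducible (bform e₀ e₁ e₂ e₃)) :
    ∀ u v : K, e₃ * u ^ 3 + e₂ * u ^ 2 * v + e₁ * u * v ^ 2 + e₀ * v ^ 3 = 0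
      → u = 0 ∧ v = 0 := by
  intro u v hroot
  by_contra hcon
  have key : ∀ a b c : K, (C e₃ : MvPolynomial (Fin 2) K) = C a * C v →
      (C e₂ : MvPolynomial (Fin 2) K) = C b * C v - C a * C u →
      (C e₁ : MvPolynomial (Fin 2) K) = C c * C v - C b * C u →
      (C e₀ : MvPolynomial (Fin 2) K) = -(C c * C u) → False := by
    intro a b c h3 h2 h1 h0
    have hfac : bform e₀ e₁ e₂ e₃
        = (C v * X 0 - C u * X 1) * (C a * X 0 ^ 2 + C b * (X 0 * X 1) + C c * X 1 ^ 2) := by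
      rw [bform]
      linear_combination (X 0 ^ 3 : MvPolynomial (Fin 2) K) * h3
        + (X 0 ^ 2 * X 1 : MvPolynomial (Fin 2) K) * h2
        + (X 0 * X 1 ^ 2 : MvPolynomial (Fin 2) K) * h1
        + (X 1 ^ 3 : MvPolynomial (Fin 2) K) * h0
    rcases hirr.isUnit_or_isUnit hfac with hu | hu
    · exact not_isUnit_of_eval_zero _ (by simp) hu
    · exact not_isUnit_of_eval_zero _ (by simp) hu
  have hCeq : ∀ p q : K, p = q → (C p : MvPolynomial (Fin 2) K) = C q := fun p q hp => by rw [hp]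
  rcases (show u ≠ 0 ∨ v ≠ 0 by tauto) with hu | hv
  · set c := -e₀ / u with hc
    set b := (c * v - e₁) / u with hb
    set a := (b * v - e₂) / u with ha
    have k0 : c * u = -e₀ := by rw [hc]; field_simp
    have k1 : b * u = c * v - e₁ := by rw [hb]; field_simp
    have k2 : a * u = b * v - e₂ := by rw [ha]; field_simp
    have h5 : (a * v - e₃) * u ^ 3 = 0 := by
      linear_combination v * u ^ 2 * k2 + v ^ 2 * u * k1 + v ^ 3 * k0 - hroot
    have k3 : a * v = e₃ := by
      rcases mul_eq_zero.mp h5 with h' | h'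
      · linear_combination h'
      · exact absurd h' (pow_ne_zero _ hu)
    apply key a b c
    · rw [← C_mul]
      exact hCeq _ _ k3.symm
    · rw [← C_mul, ← C_mul, ← C_sub]
      exact hCeq _ _ (by linear_combination k2)
    · rw [← C_mul, ← C_mul, ← C_sub]
      exact hCeq _ _ (by linear_combination k1)
    · rw [← C_mul, ← C_neg]
      exact hCeq _ _ (by linear_combination k0)
  · set a := e₃ / v with ha
    set b := (e₂ + a * u) / v with hb
    set c := (e₁ + b * u) / v with hc
    have k3 : a * v = e₃ := by rw [ha]; field_simp
    have k2 : b * v = e₂ + a * u := by rw [hb]; field_simp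
    have k1 : c * v = e₁ + b * u := by rw [hc]; field_simp
    have h5 : (c * u + e₀) * v ^ 3 = 0 := by
      linear_combination u * v ^ 2 * k1 + u ^ 2 * v * k2 + u ^ 3 * k3 + hroot
    have k0 : c * u = -e₀ := by
      rcases mul_eq_zero.mp h5 with h' | h'
      · linear_combination h'
      · exact absurd h' (pow_ne_zero _ hv)
    apply key a b c
    · rw [← C_mul]
      exact hCeq _ _ k3.symm
    · rw [← C_mul, ← C_mul, ← C_sub]
      exact hCeq _ _ (by linear_combination -k2)
    · rw [← C_mul, ← C_mul, ← C_sub]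
      exact hCeq _ _ (by linear_combination -k1)
    · rw [← C_mul, ← C_neg]
      exact hCeq _ _ (by linear_combination k0)

lemma cubicMul_field (e₀ e₁ e₂ e₃ : K)
    (h : ∀ u v : K, e₃ * u ^ 3 + e₂ * u ^ 2 * v + e₁ * u * v ^ 2 + e₀ * v ^ 3 = 0
      → u = 0 ∧ v = 0)
    (a b : Fin 3 → K) (hab : cubicMul e₀ e₁ e₂ e₃ a b = 0) : a = 0 ∨ b = 0 := by
  have he₃ : e₃ ≠ 0 := by
    intro h3
    exact one_ne_zero (h 1 0 (by rw [h3]; ring)).1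
  by_contra hcon
  push_neg at hcon
  obtain ⟨ha, hb⟩ := hcon
  set P : (Fin 3 → K) → Polynomial K := fun z =>
    Polynomial.C (e₃ * z 0 - e₁ * e₃ * z 2) + Polynomial.C (e₃ * z 1 + e₂ * z 2) * Polynomial.X
      - Polynomial.C (z 2) * Polynomial.X ^ 2 with hP
  set g : Polynomial K := Polynomial.X ^ 3 - Polynomial.C e₂ * Polynomial.X ^ 2
      + Polynomial.C (e₁ * e₃) * Polynomial.X - Polynomial.C (e₀ * e₃ ^ 2) with hg
  have hid : P a * P b
      = (Polynomial.C (a 2 * b 2) * Polynomial.X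
          - Polynomial.C (e₃ * (a 2 * b 1 + a 1 * b 2) + e₂ * (a 2 * b 2))) * g
        + Polynomial.C e₃ * P (cubicMul e₀ e₁ e₂ e₃ a b) := by
    simp only [hP, hg, cubicMul, Matrix.cons_val_zero, Matrix.cons_val_one, Matrix.head_cons,
      Matrix.cons_val_two, Matrix.tail_cons, map_add, map_sub, map_mul, Polynomial.C_pow]
    ring
  rw [hab] at hid
  have hPzero : P (0 : Fin 3 → K) = 0 := by simp [hP]
  rw [hPzero, mul_zero, add_zero] at hid
  have hPne : ∀ z : Fin 3 → K, z ≠ 0 → P z ≠ 0 := by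
    intro z hz h0
    apply hz
    have h2 : z 2 = 0 := by
      have := congrArg (fun p => Polynomial.coeff p 2) h0
      simpa [hP, Polynomial.coeff_X, Polynomial.coeff_one] using this
    have h1 : z 1 = 0 := by
      have := congrArg (fun p => Polynomial.coeff p 1) h0
      simp [hP, h2, Polynomial.coeff_X, Polynomial.coeff_one] at this
      rcases this with h | h
      · exact absurd h he₃
      · exact h
    have h00 : z 0 = 0 := by
      have := congrArg (fun p => Polynomial.coeff p 0) h0
      simp [hP, h2, Polynomial.coeff_X] at this
      rcases this with h | h
      · exact absurd h he₃
      · exact h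
    funext i
    fin_cases i <;> simp [h00, h1, h2]
  have hPa := hPne a ha
  have hPb := hPne b hb
  have hdvd : g ∣ P a * P b := ⟨_, by rw [hid, mul_comm]⟩
  have hgform : g = Polynomial.C 1 * Polynomial.X ^ 3 + Polynomial.C (-e₂) * Polynomial.X ^ 2
      + Polynomial.C (e₁ * e₃) * Polynomial.X + Polynomial.C (-(e₀ * e₃ ^ 2)) := by
    rw [hg, map_neg, map_neg, map_one]
    ring
  have hgdeg : g.natDegree = 3 := by
    rw [hgform]
    exact Polynomial.natDegree_cubic one_ne_zero
  have hgne : g ≠ 0 := fun h0 => by simp [h0] at hgdeg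
  have hPdeg : ∀ z : Fin 3 → K, (P z).natDegree ≤ 2 := by
    intro z
    apply le_trans (Polynomial.natDegree_sub_le _ _)
    rw [max_le_iff]
    constructor
    · apply le_trans (Polynomial.natDegree_add_le _ _)
      rw [max_le_iff]
      constructor
      · exact le_trans (Polynomial.natDegree_C _).le (by norm_num)
      · refine le_trans (Polynomial.natDegree_C_mul_le _ _) ?_
        rw [Polynomial.natDegree_X]
        norm_num
    · refine le_trans (Polynomial.natDegree_C_mul_le _ _) ?_
      rw [Polynomial.natDegree_X_pow]
  have hnotirr : ¬ Irreducible g := by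
    intro hirr
    have hprime : Prime g := hirr.prime
    rcases hprime.2.2 _ _ hdvd with hd | hd
    · have := Polynomial.natDegree_le_of_dvd hd hPa
      have := hPdeg a
      omega
    · have := Polynomial.natDegree_le_of_dvd hd hPb
      have := hPdeg b
      omega
  have hgu : ¬IsUnit g := Polynomial.not_isUnit_of_natDegree_pos g (by omega)
  obtain ⟨p, q, hpq, hpu, hqu⟩ : ∃ p q : Polynomial K, g = p * q ∧ ¬IsUnit p ∧ ¬IsUnit q := by
    by_contra hno
    push_neg at hno
    exact hnotirr ⟨hgu, fun p q hpq' => by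
      by_contra hc
      push_neg at hc
      exact hc.2 (hno p q hpq' hc.1)⟩
  have hp0 : p ≠ 0 := left_ne_zero_of_mul (hpq ▸ hgne)
  have hq0 : q ≠ 0 := right_ne_zero_of_mul (hpq ▸ hgne)
  have hdegs : p.natDegree + q.natDegree = 3 := by
    rw [← Polynomial.natDegree_mul hp0 hq0, ← hpq, hgdeg]
  have hdeg1 : ∀ r : Polynomial K, r ≠ 0 → ¬IsUnit r → 1 ≤ r.natDegree := by
    intro r hr0 hru
    by_contra hlt
    push_neg at hlt
    have h0 : r.natDegree = 0 := by omega
    have := Polynomial.eq_C_of_natDegree_eq_zero h0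
    apply hru
    rw [this]
    exact (Polynomial.isUnit_C).mpr ((Polynomial.C_ne_zero.mp (this ▸ hr0)).isUnit)
  have hp1 := hdeg1 p hp0 hpu
  have hq1 := hdeg1 q hq0 hqu
  obtain ⟨r, hr, hr1, hrne⟩ : ∃ r : Polynomial K, r ∣ g ∧ r.natDegree = 1 ∧ r ≠ 0 := by
    rcases (show p.natDegree = 1 ∨ q.natDegree = 1 by omega) with h1 | h1
    · exact ⟨p, ⟨q, hpq⟩, h1, hp0⟩
    · exact ⟨q, ⟨p, by rw [hpq, mul_comm]⟩, h1, hq0⟩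
  have hrd : r.degree = 1 := by
    rw [Polynomial.degree_eq_natDegree hrne, hr1]
    norm_cast
  obtain ⟨θ, hθ⟩ := Polynomial.exists_root_of_degree_eq_one hrd
  obtain ⟨s, hs⟩ := hr
  have hgθ : g.eval θ = 0 := by
    rw [hs, Polynomial.eval_mul, hθ, zero_mul]
  have hv : θ ^ 3 - e₂ * θ ^ 2 + e₁ * e₃ * θ - e₀ * e₃ ^ 2 = 0 := by
    simpa [hg] using hgθ
  have := h (-θ) e₃ (by linear_combination -e₃ * hv)
  exact he₃ this.2

end CubicAux

namespace CubicAux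

/-- Zero divisor pair from a root `(r : s)` with `s` in second position. -/
lemma zd_pair1 {R : Type*} [CommRing R] (f₀ f₁ f₂ f₃ r s : R)
    (hroot : f₃ * r ^ 3 + f₂ * r ^ 2 * s + f₁ * r * s ^ 2 + f₀ * s ^ 3 = 0) :
    cubicMul f₀ f₁ f₂ f₃ ![f₃ * r, s, 0] ![-(f₃ * r ^ 2) - f₂ * (r * s), r * s, s ^ 2] = 0 := by
  funext i
  fin_cases i
  · show _ - _ - _ - _ = (0 : Fin 3 → R) 0
    simp only [Matrix.cons_val_zero, Matrix.cons_val_one, Matrix.head_cons,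
      Matrix.cons_val_two, Matrix.tail_cons, Pi.zero_apply]
    linear_combination (-f₃) * hroot
  · show _ + _ + _ + _ = (0 : Fin 3 → R) 1
    simp only [Matrix.cons_val_zero, Matrix.cons_val_one, Matrix.head_cons,
      Matrix.cons_val_two, Matrix.tail_cons, Pi.zero_apply]
    ring
  · show _ + _ - _ - _ = (0 : Fin 3 → R) 2
    simp only [Matrix.cons_val_zero, Matrix.cons_val_one, Matrix.head_cons,
      Matrix.cons_val_two, Matrix.tail_cons, Pi.zero_apply]
    ring

/-- Zero divisor pair when `f₃ = 0`. -/
lemma zd_pair2 {R : Type*} [CommRing R] (f₀ f₁ f₂ : R) :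
    cubicMul f₀ f₁ f₂ 0 ![0, 1, 0] ![-f₂, 1, 0] = 0 := by
  funext i
  fin_cases i
  · show _ - _ - _ - _ = (0 : Fin 3 → R) 0
    simp only [Matrix.cons_val_zero, Matrix.cons_val_one, Matrix.head_cons,
      Matrix.cons_val_two, Matrix.tail_cons, Pi.zero_apply]
    ring
  · show _ + _ + _ + _ = (0 : Fin 3 → R) 1
    simp only [Matrix.cons_val_zero, Matrix.cons_val_one, Matrix.head_cons,
      Matrix.cons_val_two, Matrix.tail_cons, Pi.zero_apply]
    ring
  · show _ + _ - _ - _ = (0 : Fin 3 → R) 2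
    simp only [Matrix.cons_val_zero, Matrix.cons_val_one, Matrix.head_cons,
      Matrix.cons_val_two, Matrix.tail_cons, Pi.zero_apply]
    ring

end CubicAux

open MvPolynomial in
/-- Let `R` be an integral domain with fraction field `K` and let
`f = f₃Y₁³ + f₂Y₁²Y₂ + f₁Y₁Y₂² + f₀Y₂³` be a nonzero binary cubic form over `R`.
Then the associated cubic ring `S_f` is an integral domain (equivalently, its
multiplication `cubicMul` has no zero divisors) if and only if `f` is irreducible
as a homogeneous polynomial in `K[Y₁, Y₂]`. -/
theorem stmt_8 (R K : Type*) [CommRing R] [IsDomain R] [Field K] [Algebra R K]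
    [IsFractionRing R K] (f₀ f₁ f₂ f₃ : R)
    (hf : ¬(f₀ = 0 ∧ f₁ = 0 ∧ f₂ = 0 ∧ f₃ = 0)) :
    (∀ x y : Fin 3 → R, cubicMul f₀ f₁ f₂ f₃ x y = 0 → x = 0 ∨ y = 0) ↔
      Irreducible (C (algebraMap R K f₃) * X 0 ^ 3
        + C (algebraMap R K f₂) * X 0 ^ 2 * X 1
        + C (algebraMap R K f₁) * X 0 * X 1 ^ 2
        + C (algebraMap R K f₀) * X 1 ^ 3 : MvPolynomial (Fin 2) K) := by
  have hinj : Function.Injective (algebraMap R K) := IsFractionRing.injective R K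
  set φ := algebraMap R K with hφ
  have hFeq : (C (algebraMap R K f₃) * X 0 ^ 3
        + C (algebraMap R K f₂) * X 0 ^ 2 * X 1
        + C (algebraMap R K f₁) * X 0 * X 1 ^ 2
        + C (algebraMap R K f₀) * X 1 ^ 3 : MvPolynomial (Fin 2) K)
      = CubicAux.bform (φ f₀) (φ f₁) (φ f₂) (φ f₃) := rfl
  rw [hFeq]
  constructor
  · -- no zero divisors → irreducible
    intro hzd
    apply CubicAux.irreducible_of_noRoot
    intro u v hroot
    by_contra hcon
    -- clear denominators
    obtain ⟨a₁, b₁, hb₁, hu⟩ := IsFractionRing.div_surjective (A := R) u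
    obtain ⟨a₂, b₂, hb₂, hv⟩ := IsFractionRing.div_surjective (A := R) v
    have hb₁0 : φ b₁ ≠ 0 := fun h0 =>
      nonZeroDivisors.ne_zero hb₁ (hinj (by rw [h0, map_zero]))
    have hb₂0 : φ b₂ ≠ 0 := fun h0 =>
      nonZeroDivisors.ne_zero hb₂ (hinj (by rw [h0, map_zero]))
    set r := a₁ * b₂ with hr
    set s := a₂ * b₁ with hs
    set d := b₁ * b₂ with hd
    have hd0 : φ d ≠ 0 := by
      rw [hd, map_mul]
      exact mul_ne_zero hb₁0 hb₂0
    have hur : u = φ r / φ d := by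
      rw [hr, hd, map_mul, map_mul, ← hu, ← hφ]
      field_simp
    have hvs : v = φ s / φ d := by
      rw [hs, hd, map_mul, map_mul, ← hv, ← hφ]
      field_simp
    have hrootR : f₃ * r ^ 3 + f₂ * r ^ 2 * s + f₁ * r * s ^ 2 + f₀ * s ^ 3 = 0 := by
      apply hinj
      rw [map_zero]
      have hu' : φ a₁ = u * φ b₁ := by
        rw [← hu, div_mul_cancel₀ _ hb₁0]
      have hv' : φ a₂ = v * φ b₂ := by
        rw [← hv, div_mul_cancel₀ _ hb₂0]
      simp only [hr, hs, hd, map_mul] at *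
      simp only [map_add, map_mul, map_pow]
      rw [hu', hv']
      linear_combination (φ b₁ * φ b₂) ^ 3 * hroot
    have hrs : ¬(r = 0 ∧ s = 0) := by
      rintro ⟨hr0, hs0⟩
      apply hcon
      constructor
      · rw [hur, hr0, map_zero, zero_div]
      · rw [hvs, hs0, map_zero, zero_div]
    rcases eq_or_ne s 0 with hs0 | hs0
    · -- then r ≠ 0 and f₃ = 0
      have hr0 : r ≠ 0 := fun h0 => hrs ⟨h0, hs0⟩
      have hf₃ : f₃ = 0 := by
        have : f₃ * r ^ 3 = 0 := by
          rw [hs0] at hrootR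
          linear_combination hrootR
        rcases mul_eq_zero.mp this with h | h
        · exact h
        · exact absurd (pow_eq_zero_iff (by norm_num) |>.mp h) hr0
      have hzero := CubicAux.zd_pair2 f₀ f₁ f₂
      rw [← hf₃] at hzero
      rcases hzd _ _ hzero with h | h
      · exact absurd (congrFun h 1) (by simp)
      · exact absurd (congrFun h 1) (by simp)
    · -- s ≠ 0: use pair1
      rcases hzd _ _ (CubicAux.zd_pair1 f₀ f₁ f₂ f₃ r s hrootR) with h | h
      · have h1 := congrFun h 1
        simp at h1
        exact hs0 h1
      · have h2 := congrFun h 2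
        simp at h2
        exact hs0 h2
  · -- irreducible → no zero divisors
    intro hirr x y hxy
    have hnr := CubicAux.noRoot_of_irreducible _ _ _ _ hirr
    have hmap : cubicMul (φ f₀) (φ f₁) (φ f₂) (φ f₃) (φ ∘ x) (φ ∘ y) = 0 := by
      funext i
      fin_cases i
      · have hi : φ (x 0 * y 0 - f₁ * f₃ * (x 1 * y 1) - f₀ * f₃ * (x 1 * y 2 + x 2 * y 1)
            - f₀ * f₂ * (x 2 * y 2)) = 0 := by
          rw [show (x 0 * y 0 - f₁ * f₃ * (x 1 * y 1) - f₀ * f₃ * (x 1 * y 2 + x 2 * y 1)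
            - f₀ * f₂ * (x 2 * y 2)) = cubicMul f₀ f₁ f₂ f₃ x y 0 from rfl, hxy]
          simp
        show _ - _ - _ - _ = (0 : Fin 3 → K) 0
        simp only [Matrix.cons_val_zero, Matrix.cons_val_one, Matrix.head_cons,
          Matrix.cons_val_two, Matrix.tail_cons, Pi.zero_apply, Function.comp_apply]
        simp only [map_sub, map_add, map_mul] at hi
        linear_combination hi
      · have hi : φ (x 0 * y 1 + x 1 * y 0 + f₂ * (x 1 * y 1) + f₀ * (x 2 * y 2)) = 0 := by
          rw [show (x 0 * y 1 + x 1 * y 0 + f₂ * (x 1 * y 1) + f₀ * (x 2 * y 2))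
            = cubicMul f₀ f₁ f₂ f₃ x y 1 from rfl, hxy]
          simp
        show _ + _ + _ + _ = (0 : Fin 3 → K) 1
        simp only [Matrix.cons_val_zero, Matrix.cons_val_one, Matrix.head_cons,
          Matrix.cons_val_two, Matrix.tail_cons, Pi.zero_apply, Function.comp_apply]
        simp only [map_add, map_mul] at hi
        linear_combination hi
      · have hi : φ (x 0 * y 2 + x 2 * y 0 - f₃ * (x 1 * y 1) - f₁ * (x 2 * y 2)) = 0 := by
          rw [show (x 0 * y 2 + x 2 * y 0 - f₃ * (x 1 * y 1) - f₁ * (x 2 * y 2))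
            = cubicMul f₀ f₁ f₂ f₃ x y 2 from rfl, hxy]
          simp
        show _ + _ - _ - _ = (0 : Fin 3 → K) 2
        simp only [Matrix.cons_val_zero, Matrix.cons_val_one, Matrix.head_cons,
          Matrix.cons_val_two, Matrix.tail_cons, Pi.zero_apply, Function.comp_apply]
        simp only [map_sub, map_add, map_mul] at hi
        linear_combination hi
    rcases CubicAux.cubicMul_field _ _ _ _ hnr _ _ hmap with h | h
    · left
      funext i
      apply hinj
      simpa using congrFun h i
    · right
      funext i
      apply hinj
      simpa using congrFun h i
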